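/- Let a, b, c, d be integers and k a natural number such that a² + 2b² + c² + 2d² = 4^k and a·b + c·d = 0. Assume that a and b are not both even, and that c and d are not both even. Then k = 1, a = 0, c = 0, b² = 1 and d² = 1. -/

import Mathlib

def Sdio : Finset (ZMod 16) := {1, 2, 3, 6, 9, 11}

lemma mem_Sdio : ∀ x y : ZMod 16, ¬(8*x = 0 ∧ 8*y = 0) → x^2 + 2*y^2 ∈ Sdio := by
  decide

lemma Sdio_add : ∀ u v : ZMod 16, u ∈ Sdio → v ∈ Sdio → u + v ≠ 0 := by
  decide

lemma even_iff_8mul (a : ℤ) : Even a ↔ 8 * (a : ZMod 16) = 0 := by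
  have h : 8 * (a : ZMod 16) = ((8 * a : ℤ) : ZMod 16) := by push_cast; ring
  rw [h, ZMod.intCast_zmod_eq_zero_iff_dvd]
  constructor
  · rintro ⟨t, rfl⟩; exact ⟨t, by ring⟩
  · rintro ⟨t, ht⟩; exact ⟨t, by omega⟩

/-- If `a² + 2b² + c² + 2d² = 4^k` and `ab + cd = 0`, with
`a, b` not both even and `c, d` not both even, then `k = 1`, `a = c = 0`, and
`b² = d² = 1`. -/
theorem diophantine_four_pow_case
    (a b c d : ℤ) (k : ℕ)
    (h1 : a ^ 2 + 2 * b ^ 2 + c ^ 2 + 2 * d ^ 2 = 4 ^ k)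
    (h2 : a * b + c * d = 0)
    (hab : ¬ (Even a ∧ Even b))
    (hcd : ¬ (Even c ∧ Even d)) :
    k = 1 ∧ a = 0 ∧ c = 0 ∧ b ^ 2 = 1 ∧ d ^ 2 = 1 := by
  by_cases hk : 2 ≤ k
  · exfalso
    obtain ⟨m, rfl⟩ : ∃ m, k = 2 + m := ⟨k - 2, by omega⟩
    have hdvd : (16 : ℤ) ∣ 4 ^ (2 + m) := ⟨4 ^ m, by ring⟩
    have hz : ((4 ^ (2 + m) : ℤ) : ZMod 16) = 0 :=
      (ZMod.intCast_zmod_eq_zero_iff_dvd _ _).mpr hdvd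
    have hcast := congrArg (fun x : ℤ => (x : ZMod 16)) h1
    push_cast at hcast
    rw [show ((4:ZMod 16) ^ (2 + m)) = ((4 ^ (2 + m) : ℤ) : ZMod 16) by push_cast; ring,
      hz] at hcast
    have hab' : ¬(8 * (a : ZMod 16) = 0 ∧ 8 * (b : ZMod 16) = 0) := by
      intro ⟨h8a, h8b⟩
      exact hab ⟨(even_iff_8mul a).mpr h8a, (even_iff_8mul b).mpr h8b⟩
    have hcd' : ¬(8 * (c : ZMod 16) = 0 ∧ 8 * (d : ZMod 16) = 0) := by
      intro ⟨h8c, h8d⟩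
      exact hcd ⟨(even_iff_8mul c).mpr h8c, (even_iff_8mul d).mpr h8d⟩
    exact Sdio_add _ _ (mem_Sdio _ _ hab') (mem_Sdio _ _ hcd') (by linear_combination hcast)
  · have hbound : (4:ℤ) ^ k ≤ 4 := by
      interval_cases k <;> norm_num
    have ha2 : a ^ 2 ≤ 4 := by nlinarith [sq_nonneg b, sq_nonneg c, sq_nonneg d]
    have hb2 : b ^ 2 ≤ 2 := by nlinarith [sq_nonneg a, sq_nonneg c, sq_nonneg d]
    have hc2 : c ^ 2 ≤ 4 := by nlinarith [sq_nonneg b, sq_nonneg a, sq_nonneg d]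
    have hd2 : d ^ 2 ≤ 2 := by nlinarith [sq_nonneg a, sq_nonneg c, sq_nonneg b]
    have ha1 : -2 ≤ a := by nlinarith [sq_nonneg (a+2)]
    have ha2' : a ≤ 2 := by nlinarith [sq_nonneg (a-2)]
    have hb1 : -1 ≤ b := by
      have h : -3 ≤ 2*b := by nlinarith [sq_nonneg (b+1)]
      omega
    have hb2' : b ≤ 1 := by
      have h : 2*b ≤ 3 := by nlinarith [sq_nonneg (b-1)]
      omega
    have hc1 : -2 ≤ c := by nlinarith [sq_nonneg (c+2)]
    have hc2' : c ≤ 2 := by nlinarith [sq_nonneg (c-2)]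
    have hd1 : -1 ≤ d := by
      have h : -3 ≤ 2*d := by nlinarith [sq_nonneg (d+1)]
      omega
    have hd2' : d ≤ 1 := by
      have h : 2*d ≤ 3 := by nlinarith [sq_nonneg (d-1)]
      omega
    simp only [Int.even_iff, not_and_or] at hab hcd
    have hk' : k = 0 ∨ k = 1 := by omega
    rcases hk' with rfl | rfl <;>
    norm_num at h1 <;>
    interval_cases a <;> interval_cases b <;> interval_cases c <;> interval_cases d <;>
      norm_num at * <;> omega
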